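/- For σ, β > 0, the function γ ↦ 1/(γσ) + γβ on (0,∞) is minimized at γ = 1/√(βσ) with minimum value 2√(β/σ); consequently, the Douglas–Rachford contraction bound (|1−2α+αk/(1+k)| + αk/(1+k) with k = 1/(γσ)+γβ), optimized over γ > 0 and α ∈ (0,1), equals √(β/σ)/(√(β/σ)+1), attained at γ = 1/√(βσ) and α = (√(β/σ)+1/2)/(1+√(β/σ)). -/

import Mathlib

lemma dr_key (s k α : ℝ) (hs : 0 < s) (hk : 2 * s ≤ k) (hα0 : 0 < α) (hα1 : α < 1) :
    s / (s + 1) ≤ |1 - 2 * α + α * (k / (1 + k))| + α * (k / (1 + k)) := by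
  have hkpos : 0 < k := by linarith
  have h1k : (0:ℝ) < 1 + k := by linarith
  set t := k / (1 + k) with ht_def
  have ht : t * (1 + k) = k := div_mul_cancel₀ k h1k.ne'
  have hmid : k / (2 + k) ≤ |1 - 2 * α + α * t| + α * t := by
    rcases le_or_gt 0 (1 - 2 * α + α * t) with hc | hc
    · rw [abs_of_nonneg hc, div_le_iff₀ (by linarith : (0:ℝ) < 2 + k)]
      have hc' : 0 ≤ (1 - 2 * α + α * t) * (1 + k) := mul_nonneg hc h1k.le
      nlinarith [hc', ht, mul_pos h1k hkpos]
    · rw [abs_of_neg hc, div_le_iff₀ (by linarith : (0:ℝ) < 2 + k)]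
      have hc' : (1 - 2 * α + α * t) * (1 + k) < 0 :=
        mul_neg_of_neg_of_pos hc h1k
      nlinarith [hc', ht]
  have hstep : s / (s + 1) ≤ k / (2 + k) := by
    rw [div_le_div_iff₀ (by linarith) (by linarith)]
    nlinarith
  linarith

theorem optimal_DR_parameters (σ β : ℝ) (hσ : 0 < σ) (hβ : 0 < β) :
    (∀ γ : ℝ, 0 < γ → 2 * Real.sqrt (β / σ) ≤ 1 / (γ * σ) + γ * β) ∧
    (1 / ((1 / Real.sqrt (β * σ)) * σ) + (1 / Real.sqrt (β * σ)) * β =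
      2 * Real.sqrt (β / σ)) ∧
    (∀ γ α : ℝ, 0 < γ → 0 < α → α < 1 →
      Real.sqrt (β / σ) / (Real.sqrt (β / σ) + 1) ≤
        |1 - 2 * α + α * ((1 / (γ * σ) + γ * β) / (1 + (1 / (γ * σ) + γ * β)))|
          + α * ((1 / (γ * σ) + γ * β) / (1 + (1 / (γ * σ) + γ * β)))) ∧
    (let γ := 1 / Real.sqrt (β * σ);
     let α := (Real.sqrt (β / σ) + 1 / 2) / (1 + Real.sqrt (β / σ));
     |1 - 2 * α + α * ((1 / (γ * σ) + γ * β) / (1 + (1 / (γ * σ) + γ * β)))|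
       + α * ((1 / (γ * σ) + γ * β) / (1 + (1 / (γ * σ) + γ * β))) =
       Real.sqrt (β / σ) / (Real.sqrt (β / σ) + 1)) := by
  have hbσ : 0 < β / σ := div_pos hβ hσ
  have hs : 0 < Real.sqrt (β / σ) := Real.sqrt_pos.mpr hbσ
  set s := Real.sqrt (β / σ) with hs_def
  -- Part 1
  have h1 : ∀ γ : ℝ, 0 < γ → 2 * s ≤ 1 / (γ * σ) + γ * β := by
    intro γ hγ
    have hx : (0:ℝ) < 1 / (γ * σ) := by positivity
    have hy : (0:ℝ) < γ * β := by positivity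
    have hprod : Real.sqrt (1 / (γ * σ)) * Real.sqrt (γ * β) = s := by
      rw [← Real.sqrt_mul hx.le, hs_def]
      congr 1
      field_simp
    have hsx := Real.sq_sqrt hx.le
    have hsy := Real.sq_sqrt hy.le
    nlinarith [sq_nonneg (Real.sqrt (1 / (γ * σ)) - Real.sqrt (γ * β))]
  -- Part 2
  have hab : Real.sqrt (β * σ) = Real.sqrt β * Real.sqrt σ := Real.sqrt_mul hβ.le σ
  have hsd : s = Real.sqrt β / Real.sqrt σ := by rw [hs_def, Real.sqrt_div hβ.le]
  have ha : 0 < Real.sqrt β := Real.sqrt_pos.mpr hβ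
  have hb : 0 < Real.sqrt σ := Real.sqrt_pos.mpr hσ
  have ha2 : Real.sqrt β ^ 2 = β := Real.sq_sqrt hβ.le
  have hb2 : Real.sqrt σ ^ 2 = σ := Real.sq_sqrt hσ.le
  have h2 : 1 / ((1 / Real.sqrt (β * σ)) * σ) + (1 / Real.sqrt (β * σ)) * β = 2 * s := by
    rw [hab, hsd]
    field_simp
    linear_combination (Real.sqrt σ ^ 2 - 2 * σ) * ha2 + β * hb2
  refine ⟨h1, h2, ?_, ?_⟩
  · intro γ α hγ hα0 hα1
    exact dr_key s (1 / (γ * σ) + γ * β) α hs (h1 γ hγ) hα0 hα1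
  · intro γ α
    rw [show (1 / (γ * σ) + γ * β) = 2 * s from h2]
    have h12s : (0:ℝ) < 1 + 2 * s := by linarith
    have h1s : (0:ℝ) < 1 + s := by linarith
    have hinner : 1 - 2 * α + α * (2 * s / (1 + 2 * s)) = 0 := by
      show 1 - 2 * ((s + 1/2) / (1 + s)) + ((s + 1/2) / (1 + s)) * (2 * s / (1 + 2 * s)) = 0
      field_simp
      ring
    rw [hinner, abs_zero, zero_add]
    show ((s + 1/2) / (1 + s)) * (2 * s / (1 + 2 * s)) = s / (s + 1)
    field_simp
    ring
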